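/- Let 𝒜 = X₁¹ + X₁² and ℬ = X₂¹ + X₂² be sections of E₀. Then the C^∞(ℝ²)-submodule E₀'' of Γ(E₀) generated by 𝒜 and ℬ is closed under the bracket [·,·]_{E₀} (indeed [𝒜, ℬ]_{E₀} = 2x¹ℬ − 2x²𝒜), and the Jacobiator of [·,·]_{E₀} vanishes on every triple of sections belonging to E₀''; i.e., the restricted bracket gives E₀'' a Lie algebroid (Lie–Rinehart) structure. -/

import Mathlib

noncomputable section

set_option maxHeartbeats 1000000
set_option synthInstance.maxHeartbeats 400000

open Matrix

/-- The ℝ-algebra of smooth (C^∞) functions on ℝ². -/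
def Sm : Subalgebra ℝ ((ℝ × ℝ) → ℝ) where
  carrier := {f | ContDiff ℝ (⊤ : ℕ∞) f}
  mul_mem' := fun {a b} (hf : ContDiff ℝ (⊤ : ℕ∞) a) (hg : ContDiff ℝ (⊤ : ℕ∞) b) => hf.mul hg
  add_mem' := fun {a b} (hf : ContDiff ℝ (⊤ : ℕ∞) a) (hg : ContDiff ℝ (⊤ : ℕ∞) b) => hf.add hg
  algebraMap_mem' r :=
    show ContDiff ℝ (⊤ : ℕ∞) (algebraMap ℝ ((ℝ × ℝ) → ℝ) r) from contDiff_const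

/-- Smooth functions on the plane. -/
abbrev S : Type := Sm

lemma mem_Sm_iff {f : (ℝ × ℝ) → ℝ} : f ∈ Sm ↔ ContDiff ℝ (⊤ : ℕ∞) f := by
  rw [Sm]; rfl

lemma smooth_coe (f : S) : ContDiff ℝ (⊤ : ℕ∞) (f : (ℝ × ℝ) → ℝ) := mem_Sm_iff.mp f.2

/-- Sections of the trivial bundle `ℝ² × M₂(ℝ)`, as 2×2 matrices of smooth functions. -/
abbrev E₀ : Type := Matrix (Fin 2) (Fin 2) S

/-- The section `X_j^i`: the constant elementary matrix with 1 in entry (i,j). -/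
def sb (i j : Fin 2) : E₀ := Matrix.single i j 1

/-- First coordinate function. -/
def x₁ : S := ⟨fun p => p.1, mem_Sm_iff.mpr contDiff_fst⟩
/-- Second coordinate function. -/
def x₂ : S := ⟨fun p => p.2, mem_Sm_iff.mpr contDiff_snd⟩
/-- Coordinates. -/
def xc : Fin 2 → S := ![x₁, x₂]

/-- Directional derivative of a smooth function, in direction `v`. -/
def pdAux (v : ℝ × ℝ) (f : S) : S :=
  ⟨fun p => fderiv ℝ (f : (ℝ × ℝ) → ℝ) p v,
    mem_Sm_iff.mpr (((smooth_coe f).fderiv_right (le_refl _)).clm_apply contDiff_const)⟩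

/-- The vector field (derivation) `∂/∂v` on `ℝ²`. -/
def pd (v : ℝ × ℝ) : Derivation ℝ S S where
  toFun := pdAux v
  map_add' f g := by
    ext p
    have hf : DifferentiableAt ℝ (f : (ℝ × ℝ) → ℝ) p :=
      ((smooth_coe f).differentiable (by simp)).differentiableAt
    have hg : DifferentiableAt ℝ (g : (ℝ × ℝ) → ℝ) p :=
      ((smooth_coe g).differentiable (by simp)).differentiableAt
    have h1 : ((f + g : S) : (ℝ × ℝ) → ℝ) = fun q => (f : (ℝ × ℝ) → ℝ) q + (g : (ℝ × ℝ) → ℝ) q := rfl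
    simp only [pdAux, h1, AddMemClass.coe_add, Pi.add_apply]
    rw [fderiv_fun_add hf hg]
    simp
  map_smul' c f := by
    ext p
    have h1 : ((c • f : S) : (ℝ × ℝ) → ℝ) = fun q => c * (f : (ℝ × ℝ) → ℝ) q := rfl
    have hf : DifferentiableAt ℝ (f : (ℝ × ℝ) → ℝ) p :=
      ((smooth_coe f).differentiable (by simp)).differentiableAt
    simp only [pdAux]
    rw [h1, fderiv_const_mul hf]
    simp
  map_one_eq_zero' := by
    ext p
    have h1 : ((1 : S) : (ℝ × ℝ) → ℝ) = fun _ => (1 : ℝ) := rfl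
    have h2 : fderiv ℝ (1 : (ℝ × ℝ) → ℝ) p = 0 := fderiv_const_apply 1
    simp [pdAux, h1, h2]
  leibniz' f g := by
    ext p
    have hf : DifferentiableAt ℝ (f : (ℝ × ℝ) → ℝ) p :=
      ((smooth_coe f).differentiable (by simp)).differentiableAt
    have hg : DifferentiableAt ℝ (g : (ℝ × ℝ) → ℝ) p :=
      ((smooth_coe g).differentiable (by simp)).differentiableAt
    have h1 : ((f * g : S) : (ℝ × ℝ) → ℝ) = fun q => (f : (ℝ × ℝ) → ℝ) q * (g : (ℝ × ℝ) → ℝ) q := rfl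
    simp [pdAux, h1, fderiv_fun_mul hf hg]
    try ring

/-- Standard basis vectors of ℝ². -/
def ev : Fin 2 → ℝ × ℝ := ![(1, 0), (0, 1)]

/-- The anchor `ρ` of `E₀`: `ρ(X_j^i) = (x^i)² ∂/∂x^j`, extended `C^∞(ℝ²)`-linearly. -/
def anchor (X : E₀) : Derivation ℝ S S :=
  ∑ i : Fin 2, ∑ j : Fin 2, (X i j * xc i ^ 2) • pd (ev j)

/-- The section `𝒳₁ = (x²)² X₁¹ − (x¹)² X₁²`. -/
def 𝓧₁ : E₀ := x₂ ^ 2 • sb 0 0 - x₁ ^ 2 • sb 1 0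
/-- The section `𝒳₂ = (x²)² X₂¹ − (x¹)² X₂²`. -/
def 𝓧₂ : E₀ := x₂ ^ 2 • sb 0 1 - x₁ ^ 2 • sb 1 1

/-- The almost Lie bracket axioms for `(E₀, ρ)`, together with the defining values
`[X_j^i, X_l^k] = 2x^k δ_j^k X_l^i − 2x^i δ_l^i X_j^k` on the generators: ℝ-bilinearity,
skew-symmetry, the Leibniz rule, and the values on generators. -/
def IsBracket (L : E₀ → E₀ → E₀) : Prop :=
  (∀ X X' Y, L (X + X') Y = L X Y + L X' Y) ∧
  (∀ X Y Y', L X (Y + Y') = L X Y + L X Y') ∧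
  (∀ (c : ℝ) (X Y : E₀), L (c • X) Y = c • L X Y) ∧
  (∀ (c : ℝ) (X Y : E₀), L X (c • Y) = c • L X Y) ∧
  (∀ X Y, L Y X = - L X Y) ∧
  (∀ (f : S) (X Y : E₀), L X (f • Y) = anchor X f • Y + f • L X Y) ∧
  (∀ i j k l, L (sb i j) (sb k l) =
    (if j = k then (2 : S) * xc k else 0) • sb i l
      - (if l = i then (2 : S) * xc i else 0) • sb k j)


/-- The Jacobiator of a bracket. -/
def Jac (L : E₀ → E₀ → E₀) (X Y Z : E₀) : E₀ := L X (L Y Z) + L Y (L Z X) + L Z (L X Y)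

/-- The section `𝒜 = X₁¹ + X₁²`. -/
def 𝓐 : E₀ := sb 0 0 + sb 1 0
/-- The section `ℬ = X₂¹ + X₂²`. -/
def 𝓑 : E₀ := sb 0 1 + sb 1 1

lemma anchor_apply (X : E₀) (h : S) :
    anchor X h = X 0 0 * xc 0 ^ 2 * pd (ev 0) h + X 0 1 * xc 0 ^ 2 * pd (ev 1) h
      + X 1 0 * xc 1 ^ 2 * pd (ev 0) h + X 1 1 * xc 1 ^ 2 * pd (ev 1) h := by
  simp [anchor, Fin.sum_univ_two, smul_eq_mul, mul_assoc]
  ring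

lemma anchor_A (h : S) : anchor 𝓐 h = (xc 0 ^ 2 + xc 1 ^ 2) * pd (ev 0) h := by
  rw [anchor_apply]
  simp [𝓐, sb, Matrix.single]
  ring

lemma anchor_B (h : S) : anchor 𝓑 h = (xc 0 ^ 2 + xc 1 ^ 2) * pd (ev 1) h := by
  rw [anchor_apply]
  simp [𝓑, sb, Matrix.single]
  ring

lemma anchor_add_apply (X Y : E₀) (h : S) : anchor (X + Y) h = anchor X h + anchor Y h := by
  simp [anchor_apply, Matrix.add_apply]; ring

lemma anchor_smul_apply (f : S) (X : E₀) (h : S) : anchor (f • X) h = f * anchor X h := by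
  simp [anchor_apply, Matrix.smul_apply, smul_eq_mul]; ring
lemma pd_apply (v : ℝ × ℝ) (f : S) (p : ℝ × ℝ) :
    (pd v f : (ℝ × ℝ) → ℝ) p = fderiv ℝ (f : (ℝ × ℝ) → ℝ) p v := rfl

lemma pd_xc : ∀ i j : Fin 2, pd (ev j) (xc i) = if i = j then 1 else 0 := by
  intro i j
  apply Subtype.ext
  funext p
  fin_cases i <;> fin_cases j <;>
    simp [pd_apply, xc, x₁, x₂, ev, fderiv_fst, fderiv_snd]

lemma pd_comm (a b : Fin 2) (f : S) : pd (ev a) (pd (ev b) f) = pd (ev b) (pd (ev a) f) := by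
  apply Subtype.ext
  funext p
  have hC : ContDiff ℝ (⊤ : ℕ∞) (fderiv ℝ (f : (ℝ × ℝ) → ℝ)) :=
    (smooth_coe f).fderiv_right (le_refl _)
  have hd : ∀ q : ℝ × ℝ, DifferentiableAt ℝ (fderiv ℝ (f : (ℝ × ℝ) → ℝ)) q := fun q =>
    ((hC.differentiable (by simp)).differentiableAt)
  have key : ∀ (v w : ℝ × ℝ),
      fderiv ℝ (fun q => fderiv ℝ (f : (ℝ × ℝ) → ℝ) q w) p v =
        fderiv ℝ (fderiv ℝ (f : (ℝ × ℝ) → ℝ)) p v w := by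
    intro v w
    rw [fderiv_clm_apply (hd p) (differentiableAt_const w)]
    simp
  show fderiv ℝ (fun q => fderiv ℝ (f : (ℝ × ℝ) → ℝ) q (ev b)) p (ev a)
      = fderiv ℝ (fun q => fderiv ℝ (f : (ℝ × ℝ) → ℝ) q (ev a)) p (ev b)
  have hf1 : ∀ y, HasFDerivAt (f : (ℝ × ℝ) → ℝ) (fderiv ℝ (f : (ℝ × ℝ) → ℝ) y) y := fun y =>
    (((smooth_coe f).differentiable (by simp)).differentiableAt).hasFDerivAt
  have hsymm := second_derivative_symmetric hf1 (hd p).hasFDerivAt (ev a) (ev b)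
  rw [key, key, hsymm]
lemma pd_x₁_0 : pd (ev 0) x₁ = 1 := by simpa [xc] using pd_xc 0 0
lemma pd_x₁_1 : pd (ev 1) x₁ = 0 := by simpa [xc] using pd_xc 0 1
lemma pd_x₂_0 : pd (ev 0) x₂ = 0 := by simpa [xc] using pd_xc 1 0
lemma pd_x₂_1 : pd (ev 1) x₂ = 1 := by simpa [xc] using pd_xc 1 1

lemma der_two (D : Derivation ℝ S S) : D 2 = 0 := by
  rw [show (2 : S) = (1 : S) + (1 : S) from by norm_num, map_add,
    Derivation.map_one_eq_zero, add_zero]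

lemma anchor_A' (h : S) : anchor 𝓐 h = (x₁ ^ 2 + x₂ ^ 2) * pd (ev 0) h := by
  rw [anchor_A]; simp [xc]

lemma anchor_B' (h : S) : anchor 𝓑 h = (x₁ ^ 2 + x₂ ^ 2) * pd (ev 1) h := by
  rw [anchor_B]; simp [xc]

lemma hcomm (f : S) : anchor 𝓑 (anchor 𝓐 f) =
    anchor 𝓐 (anchor 𝓑 f) - 2 * x₁ * anchor 𝓑 f + 2 * x₂ * anchor 𝓐 f := by
  simp only [anchor_A', anchor_B']
  simp only [Derivation.leibniz, map_add, smul_eq_mul, pow_two,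
    pd_x₁_0, pd_x₁_1, pd_x₂_0, pd_x₂_1]
  rw [pd_comm 1 0 f]
  ring
-- test: bracket generator computations
section
variable (L : E₀ → E₀ → E₀)

lemma LAA (hL : IsBracket L) : L 𝓐 𝓐 = 0 := by
  obtain ⟨hal, har, -, -, -, -, hgen⟩ := hL
  rw [𝓐, hal, har, har, hgen, hgen, hgen, hgen]
  norm_num

lemma LBB (hL : IsBracket L) : L 𝓑 𝓑 = 0 := by
  obtain ⟨hal, har, -, -, -, -, hgen⟩ := hL
  rw [𝓑, hal, har, har, hgen, hgen, hgen, hgen]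
  norm_num

lemma LAB (hL : IsBracket L) : L 𝓐 𝓑 = ((2 : S) * x₁) • 𝓑 - ((2 : S) * x₂) • 𝓐 := by
  obtain ⟨hal, har, -, -, -, -, hgen⟩ := hL
  rw [𝓐, 𝓑, hal, har, har, hgen, hgen, hgen, hgen]
  norm_num [xc]
  module
end
section
variable (L : E₀ → E₀ → E₀)

lemma leib_l (hL : IsBracket L) (c : S) (X Y : E₀) :
    L (c • X) Y = -(anchor Y c) • X + c • L X Y := by
  obtain ⟨-, -, -, -, hskew, hleib, -⟩ := hL
  rw [show L (c • X) Y = -L Y (c • X) from hskew Y (c • X),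
    hleib, hskew X Y]
  module

lemma Lexp (hL : IsBracket L) (f g f' g' : S) :
    L (f • 𝓐 + g • 𝓑) (f' • 𝓐 + g' • 𝓑) =
      (f * anchor 𝓐 f' + g * anchor 𝓑 f' - f' * anchor 𝓐 f - g' * anchor 𝓑 f
        - 2 * x₂ * (f * g' - f' * g)) • 𝓐
      + (f * anchor 𝓐 g' + g * anchor 𝓑 g' - f' * anchor 𝓐 g - g' * anchor 𝓑 g
        + 2 * x₁ * (f * g' - f' * g)) • 𝓑 := by
  have hal := hL.1
  have har := hL.2.1
  have hskew := hL.2.2.2.2.1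
  have hleib := hL.2.2.2.2.2.1
  have hAA := LAA L hL
  have hBB := LBB L hL
  have hAB := LAB L hL
  have hBA : L 𝓑 𝓐 = -(((2 : S) * x₁) • 𝓑 - ((2 : S) * x₂) • 𝓐) := by
    rw [hskew 𝓐 𝓑, hAB]
  rw [har, hleib, hleib, hal, hal, leib_l L hL, leib_l L hL, leib_l L hL, leib_l L hL,
    hAA, hBB, hAB, hBA, anchor_add_apply, anchor_add_apply,
    anchor_smul_apply, anchor_smul_apply, anchor_smul_apply, anchor_smul_apply]
  module

end
lemma jac_zero (L : E₀ → E₀ → E₀) (hL : IsBracket L) (f₁ g₁ f₂ g₂ f₃ g₃ : S) :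
    Jac L (f₁ • 𝓐 + g₁ • 𝓑) (f₂ • 𝓐 + g₂ • 𝓑) (f₃ • 𝓐 + g₃ • 𝓑) = 0 := by
  rw [Jac, Lexp L hL f₂ g₂ f₃ g₃, Lexp L hL f₃ g₃ f₁ g₁, Lexp L hL f₁ g₁ f₂ g₂,
    Lexp L hL f₁ g₁, Lexp L hL f₂ g₂, Lexp L hL f₃ g₃]
  match_scalars <;>
  · simp only [Derivation.leibniz, map_add, map_sub, smul_eq_mul, der_two, hcomm,
      mul_zero, zero_mul, add_zero, zero_add, mul_one, sub_zero]
    ring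


/-- the `C^∞(ℝ²)`-submodule `E₀''` generated by `𝒜` and `ℬ` is closed under
`[·,·]_{E₀}` (indeed `[𝒜, ℬ] = 2x¹ℬ − 2x²𝒜`), and the Jacobiator vanishes on all triples
of sections of `E₀''`; so the restricted bracket gives `E₀''` a Lie algebroid structure. -/
theorem statement7 (L : E₀ → E₀ → E₀) (hL : IsBracket L) :
    (∀ X Y : E₀, X ∈ Submodule.span S ({𝓐, 𝓑} : Set E₀) →
      Y ∈ Submodule.span S ({𝓐, 𝓑} : Set E₀) →
      L X Y ∈ Submodule.span S ({𝓐, 𝓑} : Set E₀)) ∧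
    (L 𝓐 𝓑 = ((2 : S) * x₁) • 𝓑 - ((2 : S) * x₂) • 𝓐) ∧
    (∀ X Y Z : E₀, X ∈ Submodule.span S ({𝓐, 𝓑} : Set E₀) →
      Y ∈ Submodule.span S ({𝓐, 𝓑} : Set E₀) →
      Z ∈ Submodule.span S ({𝓐, 𝓑} : Set E₀) →
      Jac L X Y Z = 0) := by
  have hmem : ∀ (f g : S), f • 𝓐 + g • 𝓑 ∈ Submodule.span S ({𝓐, 𝓑} : Set E₀) := fun f g =>
    Submodule.mem_span_pair.mpr ⟨f, g, rfl⟩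
  refine ⟨?_, LAB L hL, ?_⟩
  · intro X Y hX hY
    obtain ⟨f, g, rfl⟩ := Submodule.mem_span_pair.mp hX
    obtain ⟨f', g', rfl⟩ := Submodule.mem_span_pair.mp hY
    rw [Lexp L hL]
    exact hmem _ _
  · intro X Y Z hX hY hZ
    obtain ⟨f₁, g₁, rfl⟩ := Submodule.mem_span_pair.mp hX
    obtain ⟨f₂, g₂, rfl⟩ := Submodule.mem_span_pair.mp hY
    obtain ⟨f₃, g₃, rfl⟩ := Submodule.mem_span_pair.mp hZ
    exact jac_zero L hL f₁ g₁ f₂ g₂ f₃ g₃
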